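/- Let n ≥ 1, let a < b, let g_1, …, g_{2n} ∈ C¹[a,b] be linearly independent, let ω be a continuous, strictly positive weight function on [a,b], let x_1 < … < x_n be distinct points in [a,b], and suppose σ_1, …, σ_n, η_1, …, η_n ∈ span{g_1, …, g_{2n}} satisfy σ_i(x_k) = 0, σ_i'(x_k) = δ_{ik}, η_i(x_k) = δ_{ik}, η_i'(x_k) = 0 for all i, k = 1, …, n. Then there exist weights w_1, …, w_n with ∫_a^b g_j(x)ω(x) dx = Σ_{k=1}^n w_k g_j(x_k) for all j = 1, …, 2n if and only if ∫_a^b σ_i(x)ω(x) dx = 0 for all i = 1, …, n; and in that case the weights are necessarily w_i = ∫_a^b η_i(x)ω(x) dx for i = 1, …, n. -/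

import Mathlib

open MeasureTheory

/-- Characterisation of generalised Gauss quadrature weights via a
Hermite–Lagrange basis: given nodes `x 1 < … < x n` and functions
`σ i, η i` in the span of `g 1, …, g 2n` with `σ i (x k) = 0`,
`σ i ' (x k) = δ i k`, `η i (x k) = δ i k`, `η i ' (x k) = 0`, weights making the
rule exact for all `g j` exist iff `∫ σ i ω = 0` for all `i`, in which case
necessarily `w i = ∫ η i ω`. -/
theorem gauss_weights_iff_sigma_integrals_vanish
    (n : ℕ) (hn : 1 ≤ n) (a b : ℝ) (hab : a < b)
    (g : Fin (2 * n) → ℝ → ℝ) (hg : ∀ j, ContDiff ℝ 1 (g j))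
    (hgli : LinearIndependent ℝ g)
    (ω : ℝ → ℝ) (hω : ContinuousOn ω (Set.Icc a b))
    (hωpos : ∀ t ∈ Set.Icc a b, 0 < ω t)
    (x : Fin n → ℝ) (hx : StrictMono x) (hxmem : ∀ k, x k ∈ Set.Icc a b)
    (σ η : Fin n → ℝ → ℝ)
    (hσmem : ∀ i, σ i ∈ Submodule.span ℝ (Set.range g))
    (hηmem : ∀ i, η i ∈ Submodule.span ℝ (Set.range g))
    (hσ0 : ∀ i k, σ i (x k) = 0)
    (hσ' : ∀ i k, deriv (σ i) (x k) = if i = k then 1 else 0)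
    (hη1 : ∀ i k, η i (x k) = if i = k then 1 else 0)
    (hη' : ∀ i k, deriv (η i) (x k) = 0) :
    ((∃ w : Fin n → ℝ, ∀ j, ∫ t in a..b, g j t * ω t = ∑ k, w k * g j (x k)) ↔
      ∀ i, ∫ t in a..b, σ i t * ω t = 0) ∧
    ∀ w : Fin n → ℝ, (∀ j, ∫ t in a..b, g j t * ω t = ∑ k, w k * g j (x k)) →
      ∀ i, w i = ∫ t in a..b, η i t * ω t := by
  classical
  -- every element of the span of `g` is continuous and differentiable
  have hVcd : ∀ f ∈ Submodule.span ℝ (Set.range g),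
      Continuous f ∧ Differentiable ℝ f := by
    intro f hf
    induction hf using Submodule.span_induction with
    | mem f hf =>
        obtain ⟨j, rfl⟩ := hf
        exact ⟨(hg j).continuous, (hg j).differentiable one_ne_zero⟩
    | zero => exact ⟨continuous_const, differentiable_const 0⟩
    | add f f' hf hf' ihf ihf' => exact ⟨ihf.1.add ihf'.1, ihf.2.add ihf'.2⟩
    | smul c f hf ihf => exact ⟨ihf.1.const_smul c, ihf.2.const_smul c⟩
  -- integrability
  have hint : ∀ f : ℝ → ℝ, Continuous f →
      IntervalIntegrable (fun t => f t * ω t) volume a b := by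
    intro f hf
    apply ContinuousOn.intervalIntegrable
    rw [Set.uIcc_of_le hab.le]
    exact hf.continuousOn.mul hω
  -- exactness extends from a set of continuous functions to its span
  have exact_span : ∀ (s : Set (ℝ → ℝ)), (∀ f ∈ s, Continuous f) →
      ∀ (w : Fin n → ℝ),
      (∀ f ∈ s, ∫ t in a..b, f t * ω t = ∑ k, w k * f (x k)) →
      ∀ f ∈ Submodule.span ℝ s,
        Continuous f ∧ ∫ t in a..b, f t * ω t = ∑ k, w k * f (x k) := by
    intro s hs w hw f hf
    induction hf using Submodule.span_induction with
    | mem f hf => exact ⟨hs f hf, hw f hf⟩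
    | zero => refine ⟨continuous_const, by simp⟩
    | add f f' hf hf' ihf ihf' =>
        refine ⟨ihf.1.add ihf'.1, ?_⟩
        have h1 := hint f ihf.1
        have h2 := hint f' ihf'.1
        calc ∫ t in a..b, (f + f') t * ω t
            = ∫ t in a..b, (f t * ω t + f' t * ω t) := by
              simp only [Pi.add_apply, add_mul]
          _ = (∫ t in a..b, f t * ω t) + ∫ t in a..b, f' t * ω t :=
              intervalIntegral.integral_add h1 h2
          _ = ∑ k, w k * f (x k) + ∑ k, w k * f' (x k) := by
              rw [ihf.2, ihf'.2]
          _ = ∑ k, w k * (f + f') (x k) := by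
              rw [← Finset.sum_add_distrib]
              simp [mul_add]
    | smul c f hf ihf =>
        refine ⟨ihf.1.const_smul c, ?_⟩
        calc ∫ t in a..b, (c • f) t * ω t
            = ∫ t in a..b, c * (f t * ω t) := by
              simp only [Pi.smul_apply, smul_eq_mul, mul_assoc]
          _ = c * ∫ t in a..b, f t * ω t := by
              rw [← intervalIntegral.integral_const_mul]
          _ = ∑ k, w k * (c • f) (x k) := by
              rw [ihf.2, Finset.mul_sum]
              simp [mul_comm, mul_assoc, mul_left_comm]
  have hσd : ∀ i, Differentiable ℝ (σ i) := fun i => (hVcd _ (hσmem i)).2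
  have hηd : ∀ i, Differentiable ℝ (η i) := fun i => (hVcd _ (hηmem i)).2
  -- linear independence of the combined family
  have hli : LinearIndependent ℝ (Sum.elim σ η) := by
    rw [Fintype.linearIndependent_iff]
    intro c hc
    have hval : ∀ t : ℝ, (∑ i : Fin n, c (Sum.inl i) * σ i t)
        + ∑ i : Fin n, c (Sum.inr i) * η i t = 0 := by
      intro t
      have := congrFun hc t
      simpa [Fintype.sum_sum_type, Finset.sum_apply] using this
    have hcr : ∀ k, c (Sum.inr k) = 0 := by
      intro k
      have := hval (x k)
      simpa [hσ0, hη1, mul_ite, Finset.sum_ite_eq'] using this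
    have hcl : ∀ k, c (Sum.inl k) = 0 := by
      intro k
      set F : ℝ → ℝ := fun t => (∑ i : Fin n, c (Sum.inl i) * σ i t)
        + ∑ i : Fin n, c (Sum.inr i) * η i t with hF
      have hF0 : F = fun _ => 0 := funext hval
      have hd : HasDerivAt F
          ((∑ i : Fin n, c (Sum.inl i) * deriv (σ i) (x k))
            + ∑ i : Fin n, c (Sum.inr i) * deriv (η i) (x k)) (x k) := by
        apply HasDerivAt.add
        · exact HasDerivAt.fun_sum fun i _ =>
            ((hσd i).differentiableAt.hasDerivAt).const_mul _
        · exact HasDerivAt.fun_sum fun i _ =>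
            ((hηd i).differentiableAt.hasDerivAt).const_mul _
      have hd0 : deriv F (x k) = 0 := by rw [hF0]; simp
      have := hd.deriv
      rw [hd0] at this
      have h2 := this.symm
      simpa [hσ', hη', mul_ite, Finset.sum_ite_eq'] using h2
    intro i
    cases i with
    | inl i => exact hcl i
    | inr i => exact hcr i
  -- the combined family spans the same space as `g`
  haveI : FiniteDimensional ℝ (Submodule.span ℝ (Set.range g)) :=
    FiniteDimensional.span_of_finite ℝ (Set.finite_range g)
  have hspan : Submodule.span ℝ (Set.range (Sum.elim σ η))
      = Submodule.span ℝ (Set.range g) := by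
    apply Submodule.eq_of_le_of_finrank_le
    · rw [Submodule.span_le]
      rintro _ ⟨i, rfl⟩
      cases i with
      | inl i => exact hσmem i
      | inr i => exact hηmem i
    · rw [finrank_span_eq_card hgli, finrank_span_eq_card hli]
      simp [two_mul]
  -- main claims
  have forward : (∀ i, ∫ t in a..b, σ i t * ω t = 0) →
      ∃ w : Fin n → ℝ, ∀ j, ∫ t in a..b, g j t * ω t = ∑ k, w k * g j (x k) := by
    intro hσint
    refine ⟨fun k => ∫ t in a..b, η k t * ω t, fun j => ?_⟩
    have hgmem : g j ∈ Submodule.span ℝ (Set.range (Sum.elim σ η)) := by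
      rw [hspan]
      exact Submodule.subset_span ⟨j, rfl⟩
    refine (exact_span (Set.range (Sum.elim σ η)) ?_ _ ?_ (g j) hgmem).2
    · rintro _ ⟨i, rfl⟩
      cases i with
      | inl i => exact (hVcd _ (hσmem i)).1
      | inr i => exact (hVcd _ (hηmem i)).1
    · rintro _ ⟨i, rfl⟩
      cases i with
      | inl i => simpa [hσ0] using hσint i
      | inr i => simp [hη1, mul_ite, Finset.sum_ite_eq']
  have backward : ∀ w : Fin n → ℝ,
      (∀ j, ∫ t in a..b, g j t * ω t = ∑ k, w k * g j (x k)) →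
      ∀ f ∈ Submodule.span ℝ (Set.range g),
        ∫ t in a..b, f t * ω t = ∑ k, w k * f (x k) := by
    intro w hw f hf
    refine (exact_span (Set.range g) ?_ w ?_ f hf).2
    · rintro _ ⟨j, rfl⟩; exact (hg j).continuous
    · rintro _ ⟨j, rfl⟩; exact hw j
  refine ⟨⟨fun ⟨w, hw⟩ i => ?_, forward⟩, fun w hw i => ?_⟩
  · rw [backward w hw (σ i) (hσmem i)]
    simp [hσ0]
  · rw [backward w hw (η i) (hηmem i)]
    simp [hη1, mul_ite, Finset.sum_ite_eq']
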